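/- Let $T: X^3 \to \mathbb{F}$ be the tensor formed by the direct sum of $m$ copies of the Levi-Civita tensor $\epsilon$ on $\{1,2,3\}^3$ over a field $\mathbb{F}$ of characteristic not 2 (so $|X| = 3m$). Then the slice rank of $T$ equals $3m$. -/

import Mathlib

open scoped BigOperators

/-- A tensor `T : (∀ i, X i) → F` has slice rank at most one. -/
def IsSliceOne {F : Type*} [Field F] {d : ℕ} {X : Fin d → Type*}
    (T : (∀ i, X i) → F) : Prop :=
  ∃ (i : Fin d) (u : X i → F) (v : (∀ i, X i) → F),
    (∀ x y : ∀ i, X i, (∀ j, j ≠ i → x j = y j) → v x = v y) ∧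
    ∀ x, T x = u (x i) * v x

/-- Slice rank of a function tensor: least number of slice-rank-one summands. -/
noncomputable def sliceRank {F : Type*} [Field F] {d : ℕ} {X : Fin d → Type*}
    (T : (∀ i, X i) → F) : ℕ :=
  sInf {r | ∃ S : Fin r → ((∀ i, X i) → F),
    (∀ k, IsSliceOne (S k)) ∧ ∀ x, T x = ∑ k, S k x}
/-- The Levi-Civita tensor on `{1,2,3}³` (indices `Fin 3`): the sign of the permutation
`(x,y,z)` of `(0,1,2)` when the entries are distinct, and `0` otherwise. -/
def leviCivita {F : Type*} [Field F] (x y z : Fin 3) : F :=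
  if (x, y, z) = (0, 1, 2) ∨ (x, y, z) = (1, 2, 0) ∨ (x, y, z) = (2, 0, 1) then 1
  else if (x, y, z) = (2, 1, 0) ∨ (x, y, z) = (1, 0, 2) ∨ (x, y, z) = (0, 2, 1) then -1
  else 0

/-- The direct sum of `m` copies of the Levi-Civita tensor, on index set `Fin 3 × Fin m`:
`m` diagonal `3 × 3 × 3` blocks, each a copy of `ε`, and zero elsewhere. -/
def leviCivitaSum {F : Type*} [Field F] (m : ℕ) (x y z : Fin 3 × Fin m) : F :=
  if x.2 = y.2 ∧ y.2 = z.2 then leviCivita x.1 y.1 z.1 else 0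

namespace LCAux

open Matrix Module Submodule

variable {F : Type*} [Field F]

theorem cross_ker {w v : Fin 3 → F} (hw : w ≠ 0) (h : w ⨯₃ v = 0) : ∃ c : F, v = c • w := by
  rw [cross_apply] at h
  have h0 := congrFun h 0
  have h1 := congrFun h 1
  have h2 := congrFun h 2
  simp at h0 h1 h2
  have key : ∀ c : F, v 0 = c * w 0 → v 1 = c * w 1 → v 2 = c * w 2 → ∃ c : F, v = c • w := by
    intro c e0 e1 e2
    refine ⟨c, funext fun j => ?_⟩
    fin_cases j
    · exact e0
    · exact e1
    · exact e2
  have hne : w 0 ≠ 0 ∨ w 1 ≠ 0 ∨ w 2 ≠ 0 := by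
    by_contra hc
    push_neg at hc
    exact hw (funext fun j => by fin_cases j <;> simp [hc.1, hc.2.1, hc.2.2])
  rcases hne with hi | hi | hi
  · apply key (v 0 / w 0) <;> rw [div_mul_eq_mul_div, eq_div_iff hi]
    · linear_combination h2
    · linear_combination -h1
  · apply key (v 1 / w 1) <;> rw [div_mul_eq_mul_div, eq_div_iff hi]
    · linear_combination -h2
    · linear_combination h0
  · apply key (v 2 / w 2) <;> rw [div_mul_eq_mul_div, eq_div_iff hi]
    · linear_combination h1
    · linear_combination -h0

theorem my_rank_nullity {M N : Type*} [AddCommGroup M] [Module F M] [AddCommGroup N]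
    [Module F N] [FiniteDimensional F M] (p : Submodule F M) (f : M →ₗ[F] N) :
    finrank F (p.map f) + finrank F (p ⊓ LinearMap.ker f : Submodule F M) = finrank F p := by
  have h := LinearMap.finrank_range_add_finrank_ker (f.domRestrict p)
  rw [LinearMap.range_domRestrict] at h
  rw [← h]
  have e2 : finrank F (LinearMap.ker (f.domRestrict p)) =
      finrank F (p ⊓ LinearMap.ker f : Submodule F M) := by
    rw [LinearMap.ker_domRestrict]
    have e3 := Submodule.finrank_map_subtype_eq p (comap p.subtype (LinearMap.ker f))
    rw [Submodule.map_comap_subtype] at e3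
    rw [← e3, inf_comm]
  rw [e2]

noncomputable abbrev CS1 (V W : Submodule F (Fin 3 → F)) : Submodule F (Fin 3 → F) :=
  Submodule.span F (Set.image2 (fun g h => g ⨯₃ h) (V : Set (Fin 3 → F)) (W : Set (Fin 3 → F)))

theorem cs1_mem {V W : Submodule F (Fin 3 → F)} {g h : Fin 3 → F} (hg : g ∈ V) (hh : h ∈ W) :
    g ⨯₃ h ∈ CS1 V W :=
  Submodule.subset_span (Set.mem_image2_of_mem hg hh)

theorem CS1_comm (V W : Submodule F (Fin 3 → F)) : CS1 V W = CS1 W V := by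
  have key : ∀ V W : Submodule F (Fin 3 → F), CS1 V W ≤ CS1 W V := by
    intro V W
    rw [Submodule.span_le]
    rintro x ⟨g, hg, h, hh, rfl⟩
    simp only
    rw [← cross_anticomm]
    exact neg_mem (cs1_mem hh hg)
  exact le_antisymm (key V W) (key W V)

-- F1
theorem cs1_F1 {V W : Submodule F (Fin 3 → F)} {w : Fin 3 → F} (hw : w ∈ W) (hw0 : w ≠ 0) :
    finrank F V ≤ finrank F (CS1 V W) + 1 := by
  set φ : (Fin 3 → F) →ₗ[F] (Fin 3 → F) := (crossProduct (R := F)).flip w with hφ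
  have hker : V ⊓ LinearMap.ker φ ≤ F ∙ w := by
    rintro x ⟨-, hx2⟩
    have : x ⨯₃ w = 0 := hx2
    have hwx : w ⨯₃ x = 0 := by rw [← cross_anticomm, this, neg_zero]
    rcases cross_ker hw0 hwx with ⟨c, rfl⟩
    exact Submodule.smul_mem _ c (Submodule.mem_span_singleton_self w)
  have hmap : V.map φ ≤ CS1 V W := by
    rintro x ⟨g, hg, rfl⟩
    exact cs1_mem hg hw
  have h1 := my_rank_nullity V φ
  have h2 : finrank F (V.map φ) ≤ finrank F (CS1 V W) := Submodule.finrank_mono hmap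
  have h3 : finrank F (V ⊓ LinearMap.ker φ : Submodule F (Fin 3 → F)) ≤ 1 := by
    calc finrank F (V ⊓ LinearMap.ker φ : Submodule F (Fin 3 → F)) ≤ finrank F (F ∙ w) :=
          Submodule.finrank_mono hker
      _ = 1 := finrank_span_singleton hw0
  omega

-- F4
theorem cs1_top : CS1 (⊤ : Submodule F (Fin 3 → F)) ⊤ = ⊤ := by
  have hsingle : ∀ i j k : Fin 3, (Pi.single i (1:F)) = (Pi.single j (1:F)) ⨯₃ (Pi.single k (1:F)) →
      (Pi.basisFun F (Fin 3)) i ∈ CS1 (⊤ : Submodule F (Fin 3 → F)) ⊤ := by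
    intro i j k hijk
    rw [Pi.basisFun_apply, hijk]
    exact cs1_mem trivial trivial
  have h0 := hsingle 0 1 2 (by funext j; fin_cases j <;> simp [cross_apply, Pi.single_apply])
  have h1 := hsingle 1 2 0 (by funext j; fin_cases j <;> simp [cross_apply, Pi.single_apply])
  have h2 := hsingle 2 0 1 (by funext j; fin_cases j <;> simp [cross_apply, Pi.single_apply])
  have h : span F (Set.range (Pi.basisFun F (Fin 3))) ≤ CS1 (⊤ : Submodule F (Fin 3 → F)) ⊤ := by
    rw [Submodule.span_le]
    rintro x ⟨i, rfl⟩
    fin_cases i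
    exacts [h0, h1, h2]
  rw [(Pi.basisFun F (Fin 3)).span_eq] at h
  exact le_antisymm le_top h

theorem base_bound (V W : Submodule F (Fin 3 → F)) :
    finrank F V + finrank F W ≤ 3 + finrank F (CS1 V W) := by
  have hV3 : finrank F V ≤ 3 := by
    have := Submodule.finrank_le V
    rwa [Module.finrank_pi, Fintype.card_fin] at this
  have hW3 : finrank F W ≤ 3 := by
    have := Submodule.finrank_le W
    rwa [Module.finrank_pi, Fintype.card_fin] at this
  by_cases hW : W = ⊥
  · subst hW; simp only [finrank_bot]; omega
  by_cases hV : V = ⊥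
  · subst hV; simp only [finrank_bot]; omega
  obtain ⟨w, hwW, hw0⟩ := W.ne_bot_iff.1 hW
  obtain ⟨v, hvV, hv0⟩ := V.ne_bot_iff.1 hV
  have f1 : finrank F V ≤ finrank F (CS1 V W) + 1 := cs1_F1 hwW hw0
  have f2 : finrank F W ≤ finrank F (CS1 V W) + 1 := by
    rw [CS1_comm]; exact cs1_F1 hvV hv0
  by_cases htop : finrank F V = 3 ∧ finrank F W = 3
  · have hVtop : V = ⊤ := by
      apply Submodule.eq_top_of_finrank_eq
      rw [htop.1, Module.finrank_pi, Fintype.card_fin]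
    have hWtop : W = ⊤ := by
      apply Submodule.eq_top_of_finrank_eq
      rw [htop.2, Module.finrank_pi, Fintype.card_fin]
    rw [hVtop, hWtop, cs1_top, finrank_top, Module.finrank_pi, Fintype.card_fin]
  · omega

/-- blockwise cross product -/
def crossX (m : ℕ) (g h : Fin 3 × Fin m → F) : Fin 3 × Fin m → F :=
  fun p => ((fun b => g (b, p.2)) ⨯₃ (fun b => h (b, p.2))) p.1

noncomputable abbrev CSX (m : ℕ) (V W : Submodule F (Fin 3 × Fin m → F)) :
    Submodule F (Fin 3 × Fin m → F) :=
  Submodule.span F (Set.image2 (crossX m) (V : Set _) (W : Set _))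

theorem csx_mem {m : ℕ} {V W : Submodule F (Fin 3 × Fin m → F)} {g h : Fin 3 × Fin m → F}
    (hg : g ∈ V) (hh : h ∈ W) : crossX m g h ∈ CSX m V W :=
  Submodule.subset_span (Set.mem_image2_of_mem hg hh)

theorem main_ineq : ∀ (m : ℕ) (V W : Submodule F (Fin 3 × Fin m → F)),
    finrank F V + finrank F W ≤ 3 * m + finrank F (CSX m V W) := by
  intro m
  induction m with
  | zero =>
    intro V W
    have h1 : finrank F V ≤ 0 := by
      have := Submodule.finrank_le V
      simpa [Module.finrank_pi] using this
    have h2 : finrank F W ≤ 0 := by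
      have := Submodule.finrank_le W
      simpa [Module.finrank_pi] using this
    omega
  | succ m IH =>
    intro V W
    -- the two projections
    set π : (Fin 3 × Fin (m+1) → F) →ₗ[F] (Fin 3 → F) :=
      LinearMap.funLeft F F (fun a : Fin 3 => (a, Fin.last m)) with hπ
    set ρ : (Fin 3 × Fin (m+1) → F) →ₗ[F] (Fin 3 × Fin m → F) :=
      LinearMap.funLeft F F (fun p : Fin 3 × Fin m => (p.1, p.2.castSucc)) with hρ
    have πcross : ∀ g h : Fin 3 × Fin (m+1) → F, π (crossX (m+1) g h) = (π g) ⨯₃ (π h) := by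
      intro g h; rfl
    have ρcross : ∀ g h : Fin 3 × Fin (m+1) → F, ρ (crossX (m+1) g h) = crossX m (ρ g) (ρ h) := by
      intro g h; rfl
    have kerinj : ∀ x : Fin 3 × Fin (m+1) → F, π x = 0 → ρ x = 0 → x = 0 := by
      intro x h1 h2
      funext p
      rcases Fin.eq_castSucc_or_eq_last p.2 with ⟨j, hj⟩ | hj
      · have := congrFun h2 (p.1, j)
        simpa [hρ, LinearMap.funLeft, ← hj] using this
      · have := congrFun h1 p.1
        simpa [hπ, LinearMap.funLeft, ← hj] using this
    set V' : Submodule F (Fin 3 × Fin m → F) := (V ⊓ LinearMap.ker π).map ρ with hV'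
    set W' : Submodule F (Fin 3 × Fin m → F) := (W ⊓ LinearMap.ker π).map ρ with hW'
    set S : Submodule F (Fin 3 × Fin (m+1) → F) := CSX (m+1) V W with hS
    -- dimension splitting for V and W
    have dimsplit : ∀ U : Submodule F (Fin 3 × Fin (m+1) → F),
        finrank F U = finrank F (U.map π) + finrank F ((U ⊓ LinearMap.ker π).map ρ) := by
      intro U
      have h1 := my_rank_nullity U π
      have h2 := my_rank_nullity (U ⊓ LinearMap.ker π) ρ
      have h3 : (U ⊓ LinearMap.ker π) ⊓ LinearMap.ker ρ = ⊥ := by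
        rw [eq_bot_iff]
        rintro x ⟨⟨-, hx2⟩, hx3⟩
        exact kerinj x hx2 hx3
      rw [h3, finrank_bot] at h2
      omega
    -- image of S under π contains CS1 of the projections
    have key1 : CS1 (V.map π) (W.map π) ≤ S.map π := by
      rw [Submodule.span_le]
      rintro x ⟨g', ⟨g, hg, rfl⟩, h', ⟨h, hh, rfl⟩, rfl⟩
      exact ⟨crossX (m+1) g h, csx_mem hg hh, (πcross g h).symm ▸ rfl⟩
    -- kernel part of S contains CSX of the restricted spaces
    have key2 : CSX m V' W' ≤ (S ⊓ LinearMap.ker π).map ρ := by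
      rw [Submodule.span_le]
      rintro x ⟨g', ⟨g, hg, rfl⟩, h', ⟨h, hh, rfl⟩, rfl⟩
      refine ⟨crossX (m+1) g h, ⟨csx_mem hg.1 hh.1,
        show π (crossX (m+1) g h) = 0 from ?_⟩, (ρcross g h).symm⟩
      rw [πcross g h, show π g = 0 from hg.2]
      simp
    have e1 := dimsplit V
    have e2 := dimsplit W
    rw [← hV'] at e1
    rw [← hW'] at e2
    have e3 := my_rank_nullity S π
    have ihVW := IH V' W'
    have bb := base_bound (V.map π) (W.map π)
    have m1 : finrank F (CSX m V' W') ≤ finrank F ((S ⊓ LinearMap.ker π).map ρ) :=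
      Submodule.finrank_mono key2
    have m2 : finrank F ((S ⊓ LinearMap.ker π).map ρ) ≤
        finrank F (S ⊓ LinearMap.ker π : Submodule F _) := Submodule.finrank_map_le _ _
    have m3 : finrank F (CS1 (V.map π) (W.map π)) ≤ finrank F (S.map π) :=
      Submodule.finrank_mono key1
    omega

/-- the dot product bilinear form on `α → F` -/
noncomputable def dotF (α : Type*) [Fintype α] : LinearMap.BilinForm F (α → F) :=
  LinearMap.mk₂ F (fun f g => ∑ x, f x * g x)
    (fun f f' g => by simp [add_mul, Finset.sum_add_distrib])
    (fun c f g => by simp [Finset.mul_sum, mul_assoc])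
    (fun f g g' => by simp [mul_add, Finset.sum_add_distrib])
    (fun c f g => by
      simp only [Pi.smul_apply, smul_eq_mul, Finset.mul_sum]
      exact Finset.sum_congr rfl fun x _ => by ring)

theorem dotF_apply {α : Type*} [Fintype α] (f g : α → F) : dotF α f g = ∑ x, f x * g x := rfl

theorem dotF_refl (α : Type*) [Fintype α] : (dotF (F := F) α).IsRefl := by
  intro f g h
  rw [dotF_apply] at h ⊢
  rw [← h]
  exact Finset.sum_congr rfl fun x _ => mul_comm _ _

theorem dotF_nondeg (α : Type*) [Fintype α] [DecidableEq α] :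
    (dotF (F := F) α).Nondegenerate := by
  refine ⟨fun f hf => ?_, fun f hf => ?_⟩ <;> funext x
  · have := hf (Pi.single x 1)
    rw [dotF_apply] at this
    simpa [Pi.single_apply, Finset.sum_ite_eq'] using this
  · have := hf (Pi.single x 1)
    rw [dotF_apply] at this
    simpa [Pi.single_apply, Finset.sum_ite_eq, Finset.sum_ite_eq'] using this

theorem orth_bound {α : Type*} [Fintype α] [DecidableEq α] (V U : Submodule F (α → F))
    (h : ∀ f ∈ V, ∀ g ∈ U, ∑ x, f x * g x = 0) :
    finrank F V + finrank F U ≤ Fintype.card α := by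
  have hU : U ≤ (dotF (F := F) α).orthogonal V := by
    intro g hg
    rw [LinearMap.BilinForm.mem_orthogonal_iff]
    intro f hf
    exact h f hf g hg
  have horth := LinearMap.BilinForm.finrank_orthogonal (dotF_nondeg α) V
  have hle : finrank F U ≤ finrank F ((dotF (F := F) α).orthogonal V) := Submodule.finrank_mono hU
  have hVle : finrank F V ≤ finrank F (α → F) := Submodule.finrank_le V
  have hcard : finrank F (α → F) = Fintype.card α := Module.finrank_pi F
  omega

def trip (m : ℕ) (f g h : Fin 3 × Fin m → F) : F :=
  ∑ p, ∑ q, ∑ s, leviCivitaSum m p q s * (f p * (g q * h s))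

theorem block_id (a : Fin 3) (v w : Fin 3 → F) :
    (∑ b, ∑ c, (leviCivita a b c : F) * (v b * w c)) = (v ⨯₃ w) a := by
  rw [cross_apply]
  fin_cases a <;>
    simp [Fin.sum_univ_three, leviCivita] <;> ring

theorem crossX_sum (m : ℕ) (g h : Fin 3 × Fin m → F) (p : Fin 3 × Fin m) :
    (∑ q, ∑ s, leviCivitaSum m p q s * (g q * h s)) = crossX m g h p := by
  obtain ⟨a, i⟩ := p
  rw [Fintype.sum_prod_type]
  have inner : ∀ (b : Fin 3) (j : Fin m),
      (∑ s : Fin 3 × Fin m, leviCivitaSum m (a,i) (b,j) s * (g (b,j) * h s)) =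
      if i = j then ∑ c, (leviCivita a b c : F) * (g (b,i) * h (c,i)) else 0 := by
    intro b j
    rw [Fintype.sum_prod_type]
    by_cases hj : i = j
    · subst hj
      rw [if_pos rfl]
      refine Finset.sum_congr rfl fun c _ => ?_
      simp [leviCivitaSum, ite_mul, Finset.sum_ite_eq]
    · rw [if_neg hj]
      apply Finset.sum_eq_zero; intro c _
      apply Finset.sum_eq_zero; intro k _
      simp only [leviCivitaSum]
      rw [if_neg, zero_mul]
      rintro ⟨h1, -⟩
      exact hj h1
  calc (∑ b : Fin 3, ∑ j : Fin m, ∑ s : Fin 3 × Fin m,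
          leviCivitaSum m (a,i) (b,j) s * (g (b,j) * h s))
      = ∑ b : Fin 3, ∑ j : Fin m,
          (if i = j then ∑ c, (leviCivita a b c : F) * (g (b,i) * h (c,i)) else 0) := by
        exact Finset.sum_congr rfl fun b _ => Finset.sum_congr rfl fun j _ => inner b j
    _ = ∑ b : Fin 3, ∑ c, (leviCivita a b c : F) * (g (b,i) * h (c,i)) := by
        refine Finset.sum_congr rfl fun b _ => ?_
        rw [Finset.sum_ite_eq]
        simp
    _ = crossX m g h (a, i) := block_id a _ _

theorem trip_dot (m : ℕ) (f g h : Fin 3 × Fin m → F) :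
    trip m f g h = ∑ p, f p * crossX m g h p := by
  unfold trip
  refine Finset.sum_congr rfl fun p _ => ?_
  rw [← crossX_sum m g h p, Finset.mul_sum]
  refine Finset.sum_congr rfl fun q _ => ?_
  rw [Finset.mul_sum]
  refine Finset.sum_congr rfl fun s _ => ?_
  ring

theorem factor_left {m : ℕ} (p0 : Fin 3 × Fin m) (u : (Fin 3 × Fin m) → F)
    (v : (Fin 3 → (Fin 3 × Fin m)) → F)
    (hv : ∀ x y : Fin 3 → (Fin 3 × Fin m), (∀ j, j ≠ (0:Fin 3) → x j = y j) → v x = v y)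
    (f g h : (Fin 3 × Fin m) → F) (hf : ∑ p, u p * f p = 0) :
    (∑ p, ∑ q, ∑ s, (u (![p,q,s] 0) * v ![p,q,s]) * (f p * (g q * h s))) = 0 := by
  have hv3 : ∀ p q s : Fin 3 × Fin m, v ![p,q,s] = v ![p0,q,s] := by
    intro p q s
    apply hv
    intro j hj
    fin_cases j
    · simp at hj
    · rfl
    · rfl
  calc (∑ p, ∑ q, ∑ s, (u (![p,q,s] 0) * v ![p,q,s]) * (f p * (g q * h s)))
      = ∑ p, ((u p * f p) * (∑ q, ∑ s, v ![p0,q,s] * (g q * h s))) := by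
        refine Finset.sum_congr rfl fun p _ => ?_
        rw [Finset.mul_sum]
        refine Finset.sum_congr rfl fun q _ => ?_
        rw [Finset.mul_sum]
        refine Finset.sum_congr rfl fun s _ => ?_
        rw [hv3 p q s]
        simp only [Matrix.cons_val_zero]
        ring
    _ = (∑ p, u p * f p) * (∑ q, ∑ s, v ![p0,q,s] * (g q * h s)) := (Finset.sum_mul _ _ _).symm
    _ = 0 := by rw [hf, zero_mul]

theorem factor_mid {m : ℕ} (p0 : Fin 3 × Fin m) (u : (Fin 3 × Fin m) → F)
    (v : (Fin 3 → (Fin 3 × Fin m)) → F)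
    (hv : ∀ x y : Fin 3 → (Fin 3 × Fin m), (∀ j, j ≠ (1:Fin 3) → x j = y j) → v x = v y)
    (f g h : (Fin 3 × Fin m) → F) (hg : ∑ q, u q * g q = 0) :
    (∑ p, ∑ q, ∑ s, (u (![p,q,s] 1) * v ![p,q,s]) * (f p * (g q * h s))) = 0 := by
  have hv3 : ∀ p q s : Fin 3 × Fin m, v ![p,q,s] = v ![p,p0,s] := by
    intro p q s
    apply hv
    intro j hj
    fin_cases j
    · rfl
    · simp at hj
    · rfl
  apply Finset.sum_eq_zero; intro p _
  calc (∑ q, ∑ s, (u (![p,q,s] 1) * v ![p,q,s]) * (f p * (g q * h s)))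
      = ∑ q, ((u q * g q) * (∑ s, v ![p,p0,s] * (f p * h s))) := by
        refine Finset.sum_congr rfl fun q _ => ?_
        rw [Finset.mul_sum]
        refine Finset.sum_congr rfl fun s _ => ?_
        rw [hv3 p q s]
        simp only [Matrix.cons_val_one, Matrix.head_cons, Matrix.cons_val_zero]
        ring
    _ = (∑ q, u q * g q) * (∑ s, v ![p,p0,s] * (f p * h s)) := (Finset.sum_mul _ _ _).symm
    _ = 0 := by rw [hg, zero_mul]

theorem factor_right {m : ℕ} (p0 : Fin 3 × Fin m) (u : (Fin 3 × Fin m) → F)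
    (v : (Fin 3 → (Fin 3 × Fin m)) → F)
    (hv : ∀ x y : Fin 3 → (Fin 3 × Fin m), (∀ j, j ≠ (2:Fin 3) → x j = y j) → v x = v y)
    (f g h : (Fin 3 × Fin m) → F) (hh : ∑ s, u s * h s = 0) :
    (∑ p, ∑ q, ∑ s, (u (![p,q,s] 2) * v ![p,q,s]) * (f p * (g q * h s))) = 0 := by
  have hv3 : ∀ p q s : Fin 3 × Fin m, v ![p,q,s] = v ![p,q,p0] := by
    intro p q s
    apply hv
    intro j hj
    fin_cases j
    · rfl
    · rfl
    · simp at hj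
  apply Finset.sum_eq_zero; intro p _
  apply Finset.sum_eq_zero; intro q _
  calc (∑ s, (u (![p,q,s] 2) * v ![p,q,s]) * (f p * (g q * h s)))
      = ∑ s, ((u s * h s) * (v ![p,q,p0] * (f p * g q))) := by
        refine Finset.sum_congr rfl fun s _ => ?_
        rw [hv3 p q s]
        simp only [Matrix.cons_val_two, Matrix.tail_cons, Matrix.head_cons]
        ring
    _ = (∑ s, u s * h s) * (v ![p,q,p0] * (f p * g q)) := (Finset.sum_mul _ _ _).symm
    _ = 0 := by rw [hh, zero_mul]

theorem lower_bound {m r : ℕ} (S : Fin r → ((Fin 3 → Fin 3 × Fin m) → F))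
    (h1 : ∀ k, IsSliceOne (S k))
    (hsum : ∀ x : Fin 3 → Fin 3 × Fin m, leviCivitaSum m (x 0) (x 1) (x 2) = ∑ k, S k x) :
    3 * m ≤ r := by
  rcases Nat.eq_zero_or_pos m with rfl | hm
  · omega
  have p0 : Fin 3 × Fin m := ((0 : Fin 3), ⟨0, hm⟩)
  choose i u v hv hfac using h1
  set Vs : Fin 3 → Submodule F (Fin 3 × Fin m → F) := fun j =>
    LinearMap.ker (LinearMap.pi (fun k : {k : Fin r // i k = j} =>
      dotF (Fin 3 × Fin m) (u k.1))) with hVs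
  -- membership criterion
  have hmem : ∀ (j : Fin 3) (f : Fin 3 × Fin m → F) (_ : f ∈ Vs j) (k : Fin r) (_ : i k = j),
      (∑ p, u k p * f p) = 0 := by
    intro j f hf k hk
    rw [hVs] at hf
    have h0 := congrFun (LinearMap.mem_ker.1 hf) ⟨k, hk⟩
    rw [← dotF_apply (u k) f]
    exact h0
  -- rank bound
  have hVj : ∀ j : Fin 3, 3 * m ≤ finrank F (Vs j) + Fintype.card {k : Fin r // i k = j} := by
    intro j
    rw [show Vs j = LinearMap.ker (LinearMap.pi (fun k : {k : Fin r // i k = j} =>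
      dotF (Fin 3 × Fin m) (u k.1))) from rfl]
    have hr := LinearMap.finrank_range_add_finrank_ker
      (LinearMap.pi (fun k : {k : Fin r // i k = j} => dotF (Fin 3 × Fin m) (u k.1)))
    have h2 : finrank F (LinearMap.range (LinearMap.pi (fun k : {k : Fin r // i k = j} =>
        dotF (Fin 3 × Fin m) (u k.1)))) ≤ Fintype.card {k : Fin r // i k = j} := by
      calc finrank F (LinearMap.range (LinearMap.pi (fun k : {k : Fin r // i k = j} =>
            dotF (Fin 3 × Fin m) (u k.1)))) ≤ finrank F ({k : Fin r // i k = j} → F) :=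
            Submodule.finrank_le _
        _ = Fintype.card {k : Fin r // i k = j} := Module.finrank_pi F
    have h3 : finrank F ((Fin 3 × Fin m) → F) = 3 * m := by
      rw [Module.finrank_pi, Fintype.card_prod, Fintype.card_fin, Fintype.card_fin]
    rw [h3] at hr
    omega
  -- fiber counting
  have hcard : Fintype.card {k : Fin r // i k = 0} + Fintype.card {k : Fin r // i k = 1}
      + Fintype.card {k : Fin r // i k = 2} = r := by
    have hfib := Finset.card_eq_sum_card_fiberwise
      (f := i) (s := Finset.univ) (t := Finset.univ) (fun k _ => Finset.mem_univ (i k))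
    rw [Finset.card_univ, Fintype.card_fin, Fin.sum_univ_three] at hfib
    rw [Fintype.card_subtype, Fintype.card_subtype, Fintype.card_subtype]
    omega
  -- vanishing of trip
  have hvan : ∀ f ∈ Vs 0, ∀ g ∈ Vs 1, ∀ h ∈ Vs 2, trip m f g h = 0 := by
    intro f hf g hg h hh
    unfold trip
    calc (∑ p, ∑ q, ∑ s, leviCivitaSum m p q s * (f p * (g q * h s)))
        = ∑ p, ∑ q, ∑ s, ∑ k, (S k ![p,q,s]) * (f p * (g q * h s)) := by
          refine Finset.sum_congr rfl fun p _ => Finset.sum_congr rfl fun q _ =>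
            Finset.sum_congr rfl fun s _ => ?_
          rw [show leviCivitaSum m p q s = ∑ k, S k ![p,q,s] from hsum ![p,q,s],
            Finset.sum_mul]
      _ = ∑ k, ∑ p, ∑ q, ∑ s, (S k ![p,q,s]) * (f p * (g q * h s)) := by
          calc (∑ p, ∑ q, ∑ s, ∑ k, (S k ![p,q,s]) * (f p * (g q * h s)))
              = ∑ p, ∑ q, ∑ k, ∑ s, (S k ![p,q,s]) * (f p * (g q * h s)) :=
                Finset.sum_congr rfl fun p _ => Finset.sum_congr rfl fun q _ =>
                  Finset.sum_comm
            _ = ∑ p, ∑ k, ∑ q, ∑ s, (S k ![p,q,s]) * (f p * (g q * h s)) :=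
                Finset.sum_congr rfl fun p _ => Finset.sum_comm
            _ = ∑ k, ∑ p, ∑ q, ∑ s, (S k ![p,q,s]) * (f p * (g q * h s)) :=
                Finset.sum_comm
      _ = 0 := by
          refine Finset.sum_eq_zero fun k _ => ?_
          have hcases : i k = 0 ∨ i k = 1 ∨ i k = 2 := by
            have : ∀ j : Fin 3, j = 0 ∨ j = 1 ∨ j = 2 := by decide
            exact this (i k)
          have hrw : ∀ p q s : Fin 3 × Fin m,
              S k ![p,q,s] = u k (![p,q,s] (i k)) * v k ![p,q,s] := fun p q s => hfac k _
          rcases hcases with hik | hik | hik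
          · calc (∑ p, ∑ q, ∑ s, (S k ![p,q,s]) * (f p * (g q * h s)))
                = ∑ p, ∑ q, ∑ s, (u k (![p,q,s] 0) * v k ![p,q,s]) * (f p * (g q * h s)) := by
                  refine Finset.sum_congr rfl fun p _ => Finset.sum_congr rfl fun q _ =>
                    Finset.sum_congr rfl fun s _ => ?_
                  rw [hrw p q s, hik]
              _ = 0 := factor_left p0 (u k) (v k) (hik ▸ hv k) f g h (hmem 0 f hf k hik)
          · calc (∑ p, ∑ q, ∑ s, (S k ![p,q,s]) * (f p * (g q * h s)))
                = ∑ p, ∑ q, ∑ s, (u k (![p,q,s] 1) * v k ![p,q,s]) * (f p * (g q * h s)) := by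
                  refine Finset.sum_congr rfl fun p _ => Finset.sum_congr rfl fun q _ =>
                    Finset.sum_congr rfl fun s _ => ?_
                  rw [hrw p q s, hik]
              _ = 0 := factor_mid p0 (u k) (v k) (hik ▸ hv k) f g h (hmem 1 g hg k hik)
          · calc (∑ p, ∑ q, ∑ s, (S k ![p,q,s]) * (f p * (g q * h s)))
                = ∑ p, ∑ q, ∑ s, (u k (![p,q,s] 2) * v k ![p,q,s]) * (f p * (g q * h s)) := by
                  refine Finset.sum_congr rfl fun p _ => Finset.sum_congr rfl fun q _ =>
                    Finset.sum_congr rfl fun s _ => ?_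
                  rw [hrw p q s, hik]
              _ = 0 := factor_right p0 (u k) (v k) (hik ▸ hv k) f g h (hmem 2 h hh k hik)
  -- orthogonality
  have horth : finrank F (Vs 0) + finrank F (CSX m (Vs 1) (Vs 2)) ≤ 3 * m := by
    have hb := orth_bound (Vs 0) (CSX m (Vs 1) (Vs 2)) ?_
    · rwa [Fintype.card_prod, Fintype.card_fin, Fintype.card_fin] at hb
    · intro f hf y hy
      have hle : CSX m (Vs 1) (Vs 2) ≤ LinearMap.ker (dotF (Fin 3 × Fin m) f) := by
        rw [Submodule.span_le]
        rintro x ⟨g, hg, h, hh, rfl⟩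
        have : dotF (Fin 3 × Fin m) f (crossX m g h) = 0 := by
          rw [dotF_apply, ← trip_dot]
          exact hvan f hf g hg h hh
        exact this
      have := hle hy
      rw [LinearMap.mem_ker, dotF_apply] at this
      exact this
  have hmain := main_ineq m (Vs 1) (Vs 2)
  have h0 := hVj 0
  have h1 := hVj 1
  have h2 := hVj 2
  omega

theorem upper_mem (m : ℕ) :
    ∃ S : Fin (3*m) → ((Fin 3 → Fin 3 × Fin m) → F),
      (∀ k, IsSliceOne (S k)) ∧
      ∀ x : Fin 3 → Fin 3 × Fin m,
        leviCivitaSum m (x 0) (x 1) (x 2) = ∑ k, S k x := by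
  have e : Fin 3 × Fin m ≃ Fin (3 * m) := finProdFinEquiv
  refine ⟨fun k x => (if x 0 = e.symm k then 1 else 0) *
    leviCivitaSum m (e.symm k) (x 1) (x 2), fun k => ?_, fun x => ?_⟩
  · exact ⟨0, fun w => if w = e.symm k then 1 else 0,
      fun x => leviCivitaSum m (e.symm k) (x 1) (x 2),
      fun x y hxy => by
        show leviCivitaSum m (e.symm k) (x 1) (x 2) = leviCivitaSum m (e.symm k) (y 1) (y 2)
        rw [hxy 1 (by decide), hxy 2 (by decide)],
      fun x => rfl⟩
  · refine Eq.symm ?_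
    calc (∑ k, (if x 0 = e.symm k then (1:F) else 0) * leviCivitaSum m (e.symm k) (x 1) (x 2))
        = ∑ p : Fin 3 × Fin m, (if x 0 = p then (1:F) else 0) * leviCivitaSum m p (x 1) (x 2) :=
          Equiv.sum_comp e.symm
            (fun p => (if x 0 = p then (1:F) else 0) * leviCivitaSum m p (x 1) (x 2))
      _ = leviCivitaSum m (x 0) (x 1) (x 2) := by
          simp [ite_mul, Finset.sum_ite_eq]

end LCAux

theorem sliceRank_leviCivitaSum {F : Type*} [Field F] (h2 : (2 : F) ≠ 0) (m : ℕ) :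
    sliceRank (fun x : Fin 3 → Fin 3 × Fin m => (leviCivitaSum m (x 0) (x 1) (x 2) : F)) = 3 * m := by
  unfold sliceRank
  have hmem : 3 * m ∈ {r | ∃ S : Fin r → ((Fin 3 → Fin 3 × Fin m) → F),
      (∀ k, IsSliceOne (S k)) ∧
      ∀ x : Fin 3 → Fin 3 × Fin m,
        (fun x : Fin 3 → Fin 3 × Fin m => (leviCivitaSum m (x 0) (x 1) (x 2) : F)) x
          = ∑ k, S k x} := by
    obtain ⟨S, hS1, hS2⟩ := LCAux.upper_mem (F := F) m
    exact ⟨S, hS1, hS2⟩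
  apply le_antisymm
  · exact Nat.sInf_le hmem
  · refine le_csInf ⟨_, hmem⟩ ?_
    rintro r ⟨S, hS1, hS2⟩
    exact LCAux.lower_bound S hS1 hS2
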